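/- For every α > 0, every integer n ≥ 0, and every real s > −1/2, the Laplace transform of the generalized Laguerre function satisfies ∫_0^∞ e^{−sx} φ_n^{(α)}(x) dx = (Γ(n+α+1)/Γ(n+1)) · (1/2 − s)^n / (s + 1/2)^{n+1+α}. -/

import Mathlib

open MeasureTheory Set Real Finset

noncomputable def lagC (p : ℝ) (k j : ℕ) : ℝ :=
  (-1 : ℝ) ^ (k + j) * (k.choose j) * ∏ i ∈ Finset.range j, (p - i)

lemma lagC_zero (p : ℝ) (k : ℕ) : lagC p (k+1) 0 = - lagC p k 0 := by
  simp [lagC, pow_succ]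

lemma lagC_succ (p : ℝ) (k m : ℕ) :
    lagC p (k+1) (m+1) = (p - m) * lagC p k m - lagC p k (m+1) := by
  unfold lagC
  rw [Nat.choose_succ_succ, Finset.prod_range_succ]
  have h1 : (k + 1) + (m + 1) = (k + m) + 2 := by ring
  have h2 : k + (m + 1) = (k + m) + 1 := by ring
  rw [h1, h2, pow_succ, pow_succ]
  push_cast
  ring

noncomputable def lagS (p : ℝ) (k : ℕ) (x : ℝ) : ℝ :=
  ∑ j ∈ Finset.range (k+1), lagC p k j * x ^ (p - (j:ℝ))

lemma lagC_top (p : ℝ) (k : ℕ) : lagC p k (k+1) = 0 := by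
  simp [lagC, Nat.choose_succ_self]

lemma lagS_succ (p : ℝ) (k : ℕ) (x : ℝ) :
    lagS p (k+1) x
      = ∑ j ∈ Finset.range (k+1), (lagC p k j * ((p - j) * x ^ (p - (j:ℝ) - 1))) - lagS p k x := by
  unfold lagS
  rw [Finset.sum_range_succ' (fun j => lagC p (k+1) j * x ^ (p - (j:ℝ)))]
  have hshift : ∀ j : ℕ, lagC p (k+1) (j+1) * x ^ (p - ((j+1:ℕ):ℝ))
      = lagC p k j * ((p - j) * x ^ (p - (j:ℝ) - 1)) - lagC p k (j+1) * x ^ (p - ((j+1:ℕ):ℝ)) := by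
    intro j
    rw [lagC_succ]
    push_cast
    ring_nf
  calc (∑ j ∈ Finset.range (k+1), lagC p (k+1) (j+1) * x ^ (p - ((j+1:ℕ):ℝ)))
        + lagC p (k+1) 0 * x ^ (p - ((0:ℕ):ℝ))
      = ∑ j ∈ Finset.range (k+1), (lagC p k j * ((p - j) * x ^ (p - (j:ℝ) - 1))
          - lagC p k (j+1) * x ^ (p - ((j+1:ℕ):ℝ)))
        - lagC p k 0 * x ^ (p - ((0:ℕ):ℝ)) := by
        rw [Finset.sum_congr rfl (fun j _ => hshift j), lagC_zero]; ring
    _ = ∑ j ∈ Finset.range (k+1), lagC p k j * ((p - j) * x ^ (p - (j:ℝ) - 1))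
        - (∑ j ∈ Finset.range (k+1), lagC p k (j+1) * x ^ (p - ((j+1:ℕ):ℝ))
           + lagC p k 0 * x ^ (p - ((0:ℕ):ℝ))) := by
        rw [Finset.sum_sub_distrib]; ring
    _ = _ := by
        rw [← Finset.sum_range_succ' (fun j => lagC p k j * x ^ (p - (j:ℝ))) (k+1),
          Finset.sum_range_succ (fun j => lagC p k j * x ^ (p - (j:ℝ))) (k+1), lagC_top]
        simp [lagS]

noncomputable def lagH (p : ℝ) (k : ℕ) (x : ℝ) : ℝ := lagS p k x * Real.exp (-x)

lemma hasDerivAt_lagH (p : ℝ) (k : ℕ) {x : ℝ} (hx : 0 < x) :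
    HasDerivAt (lagH p k) (lagH p (k+1) x) x := by
  have h1 : HasDerivAt (lagS p k)
      (∑ j ∈ Finset.range (k+1), lagC p k j * ((p - j) * x ^ (p - (j:ℝ) - 1))) x := by
    apply HasDerivAt.fun_sum
    intro j _
    exact (Real.hasDerivAt_rpow_const (p := p - (j:ℝ)) (Or.inl hx.ne')).const_mul (lagC p k j)
  have h2 : HasDerivAt (fun y => Real.exp (-y)) (-Real.exp (-x)) x := by
    simpa [Function.comp_def] using (Real.hasDerivAt_exp (-x)).comp x (hasDerivAt_neg x)
  have h3 := h1.mul h2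
  have h4 : lagH p (k+1) x =
      (∑ j ∈ Finset.range (k+1), lagC p k j * ((p - j) * x ^ (p - (j:ℝ) - 1))) * Real.exp (-x)
        + lagS p k x * (-Real.exp (-x)) := by
    unfold lagH
    rw [lagS_succ]
    ring
  rw [h4]
  exact h3

lemma iter_eq (p : ℝ) (k : ℕ) :
    ∀ x ∈ Ioi (0:ℝ), iteratedDeriv k (fun y => y ^ p * Real.exp (-y)) x = lagH p k x := by
  induction k with
  | zero =>
    intro x _
    simp [iteratedDeriv_zero, lagH, lagS, lagC]
  | succ k ih =>
    intro x hx
    rw [iteratedDeriv_succ]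
    have hev : iteratedDeriv k (fun y => y ^ p * Real.exp (-y)) =ᶠ[nhds x] lagH p k :=
      Filter.eventuallyEq_of_mem (isOpen_Ioi.mem_nhds hx) ih
    rw [hev.deriv_eq, (hasDerivAt_lagH p k hx).deriv]

lemma term_int {q c : ℝ} (hq : -1 < q) (hc : c < 1) :
    IntegrableOn (fun x : ℝ => x ^ q * Real.exp ((c-1) * x)) (Ioi 0) := by
  have h := integrableOn_rpow_mul_exp_neg_mul_rpow hq (zero_lt_one : (0:ℝ) < 1) (sub_pos.mpr hc)
  refine h.congr_fun (fun x _ => ?_) measurableSet_Ioi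
  beta_reduce
  rw [Real.rpow_one]
  ring_nf

lemma G_eq (p c : ℝ) (k : ℕ) (x : ℝ) :
    Real.exp (c*x) * lagH p k x
      = ∑ j ∈ Finset.range (k+1), lagC p k j * (x ^ (p - (j:ℝ)) * Real.exp ((c-1) * x)) := by
  have hexp : Real.exp (c*x) * Real.exp (-x) = Real.exp ((c-1)*x) := by
    rw [← Real.exp_add]; ring_nf
  unfold lagH lagS
  rw [Finset.sum_mul, Finset.mul_sum]
  refine Finset.sum_congr rfl fun j _ => ?_
  calc Real.exp (c*x) * (lagC p k j * x ^ (p - (j:ℝ)) * Real.exp (-x))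
      = lagC p k j * (x ^ (p - (j:ℝ)) * (Real.exp (c*x) * Real.exp (-x))) := by ring
    _ = _ := by rw [hexp]

lemma G_int {p c : ℝ} (hc : c < 1) (k : ℕ) (hk : ∀ j ∈ Finset.range (k+1), -1 < p - (j:ℝ)) :
    IntegrableOn (fun x => Real.exp (c*x) * lagH p k x) (Ioi 0) := by
  have h : IntegrableOn
      (fun x : ℝ => ∑ j ∈ Finset.range (k+1), lagC p k j * (x ^ (p - (j:ℝ)) * Real.exp ((c-1) * x)))
      (Ioi 0) :=
    integrable_finset_sum _ fun j hj => (term_int (hk j hj) hc).const_mul _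
  exact h.congr_fun (fun x _ => (G_eq p c k x).symm) measurableSet_Ioi

lemma G_tendsto {p c : ℝ} (hc : c < 1) (k : ℕ) :
    Filter.Tendsto (fun x => Real.exp (c*x) * lagH p k x) Filter.atTop (nhds 0) := by
  have h : ∀ j : ℕ, Filter.Tendsto
      (fun x : ℝ => lagC p k j * (x ^ (p - (j:ℝ)) * Real.exp ((c-1) * x))) Filter.atTop (nhds 0) := by
    intro j
    have h0 := tendsto_rpow_mul_exp_neg_mul_atTop_nhds_zero (p - (j:ℝ)) (1-c) (sub_pos.mpr hc)
    have h2 : (fun x : ℝ => x ^ (p-(j:ℝ)) * Real.exp ((c-1)*x))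
        = fun x : ℝ => x ^ (p-(j:ℝ)) * Real.exp (-(1-c)*x) := by
      funext x; ring_nf
    rw [← h2] at h0
    simpa using h0.const_mul (lagC p k j)
  have h3 := tendsto_finset_sum (Finset.range (k+1)) (fun j _ => h j)
  rw [Finset.sum_const_zero] at h3
  refine h3.congr fun x => (G_eq p c k x).symm

lemma lagH_zero {p : ℝ} {k : ℕ} (hk : ∀ j ∈ Finset.range (k+1), 0 < p - (j:ℝ)) :
    lagH p k 0 = 0 := by
  unfold lagH lagS
  rw [Finset.sum_eq_zero fun j hj => by
    rw [Real.zero_rpow (ne_of_gt (hk j hj)), mul_zero]]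
  rw [zero_mul]

lemma G_contAt {p c : ℝ} (k : ℕ) (hk : ∀ j ∈ Finset.range (k+1), 0 < p - (j:ℝ)) :
    ContinuousAt (fun x => Real.exp (c*x) * lagH p k x) 0 := by
  have hS : ContinuousAt (lagS p k) 0 := by
    unfold lagS
    exact tendsto_finset_sum (Finset.range (k+1)) fun j hj =>
      continuousAt_const.mul (Real.continuousAt_rpow_const 0 _ (Or.inr (le_of_lt (hk j hj))))
  have hH : ContinuousAt (lagH p k) 0 :=
    hS.mul ((Real.continuous_exp.comp continuous_neg).continuousAt)
  exact ((Real.continuous_exp.comp (continuous_const.mul continuous_id)).continuousAt).mul hH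

lemma step {p c : ℝ} (hc : c < 1) (k : ℕ) (hk : ∀ j ∈ Finset.range (k+2), 0 < p - (j:ℝ)) :
    (∫ x in Ioi (0:ℝ), Real.exp (c*x) * lagH p (k+1) x)
      = (-c) * ∫ x in Ioi (0:ℝ), Real.exp (c*x) * lagH p k x := by
  have hk1 : ∀ j ∈ Finset.range (k+1), 0 < p - (j:ℝ) := fun j hj =>
    hk j (Finset.mem_range.mpr (Nat.lt_succ_of_lt (Finset.mem_range.mp hj)))
  have i0 : IntegrableOn (fun x => Real.exp (c*x) * lagH p k x) (Ioi 0) :=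
    G_int hc k fun j hj => by linarith [hk1 j hj]
  have i1 : IntegrableOn (fun x => Real.exp (c*x) * lagH p (k+1) x) (Ioi 0) :=
    G_int hc (k+1) fun j hj => by linarith [hk j hj]
  have hderiv : ∀ x ∈ Ioi (0:ℝ), HasDerivAt (fun x => Real.exp (c*x) * lagH p k x)
      (c * (Real.exp (c*x) * lagH p k x) + Real.exp (c*x) * lagH p (k+1) x) x := by
    intro x hx
    have he : HasDerivAt (fun x : ℝ => Real.exp (c*x)) (c * Real.exp (c*x)) x := by
      simpa [mul_comm, Function.comp_def] using (Real.hasDerivAt_exp (c*x)).comp x ((hasDerivAt_id x).const_mul c)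
    have h : HasDerivAt (fun y => Real.exp (c*y) * lagH p k y) _ x := he.mul (hasDerivAt_lagH p k hx)
    convert h using 1
    ring
  have f'int : IntegrableOn (fun x => c * (Real.exp (c*x) * lagH p k x)
      + Real.exp (c*x) * lagH p (k+1) x) (Ioi 0) := (i0.const_mul c).add i1
  have key := integral_Ioi_of_hasDerivAt_of_tendsto
    (G_contAt (c := c) k hk1).continuousWithinAt hderiv f'int (G_tendsto hc k)
  rw [lagH_zero hk1, mul_zero, zero_sub, neg_zero] at key
  rw [integral_add (i0.const_mul c) i1, integral_const_mul] at key
  linarith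

lemma chain {p c : ℝ} (hc : c < 1) (k : ℕ) (hk : ∀ j ∈ Finset.range (k+1), 0 < p - (j:ℝ)) :
    (∫ x in Ioi (0:ℝ), Real.exp (c*x) * lagH p k x)
      = (-c)^k * ∫ x in Ioi (0:ℝ), Real.exp (c*x) * lagH p 0 x := by
  induction k with
  | zero => simp
  | succ k ih =>
    have hk1 : ∀ j ∈ Finset.range (k+1), 0 < p - (j:ℝ) := fun j hj =>
      hk j (Finset.mem_range.mpr (Nat.lt_succ_of_lt (Finset.mem_range.mp hj)))
    rw [step hc k hk, ih hk1, pow_succ]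
    ring

lemma base {p c : ℝ} (hp : 0 < p) (hc : c < 1) :
    (∫ x in Ioi (0:ℝ), Real.exp (c*x) * lagH p 0 x)
      = (1/(1-c)) ^ (p+1) * Real.Gamma (p+1) := by
  rw [← Real.integral_rpow_mul_exp_neg_mul_Ioi (by linarith : (0:ℝ) < p + 1) (sub_pos.mpr hc)]
  refine setIntegral_congr_fun measurableSet_Ioi fun x hx => ?_
  have hexp : Real.exp (c*x) * Real.exp (-x) = Real.exp (-((1-c)*x)) := by
    rw [← Real.exp_add]; ring_nf
  have h0 : p + 1 - 1 = p := by ring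
  have h1 : lagH p 0 x = x ^ p * Real.exp (-x) := by
    simp [lagH, lagS, lagC]
  rw [h1, h0]
  calc Real.exp (c*x) * (x ^ p * Real.exp (-x))
      = x ^ p * (Real.exp (c*x) * Real.exp (-x)) := by ring
    _ = x ^ p * Real.exp (-((1-c)*x)) := by rw [hexp]

/-- The monic generalized Laguerre polynomial `L_n^{(α)}`, via the Rodrigues formula. -/
noncomputable def laguerreL (α : ℝ) (n : ℕ) (x : ℝ) : ℝ :=
  (-1 : ℝ) ^ n * Real.exp x * x ^ (-α) *
    iteratedDeriv n (fun y => y ^ ((n : ℝ) + α) * Real.exp (-y)) x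

/-- The generalized Laguerre function `φ_n^{(α)}(x) = e^{-x/2} x^α L_n^{(α)}(x)/Γ(n+1)`. -/
noncomputable def laguerrePhi (α : ℝ) (n : ℕ) (x : ℝ) : ℝ :=
  Real.exp (-x / 2) * x ^ α * laguerreL α n x / Real.Gamma ((n : ℝ) + 1)

/-- Laplace transform of the generalized Laguerre function. -/
theorem stmt_5 (α : ℝ) (hα : 0 < α) (n : ℕ) (s : ℝ) (hs : -1/2 < s) :
    (∫ x in Ioi (0:ℝ), Real.exp (-s * x) * laguerrePhi α n x) =
      (Real.Gamma ((n : ℝ) + α + 1) / Real.Gamma ((n : ℝ) + 1)) *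
        (1/2 - s) ^ n / (s + 1/2) ^ ((n : ℝ) + 1 + α) := by
  set p : ℝ := (n : ℝ) + α with hp_def
  set c : ℝ := 1/2 - s with hc_def
  have hc : c < 1 := by rw [hc_def]; linarith
  have hp : 0 < p := by positivity
  have hkn : ∀ j ∈ Finset.range (n+1), 0 < p - (j:ℝ) := by
    intro j hj
    have : (j:ℝ) ≤ (n:ℝ) := by exact_mod_cast Nat.lt_succ_iff.mp (Finset.mem_range.mp hj)
    rw [hp_def]; linarith
  have hΓ : 0 < Real.Gamma ((n:ℝ)+1) := Real.Gamma_pos_of_pos (by positivity)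
  have hcong : ∀ x ∈ Ioi (0:ℝ), Real.exp (-s * x) * laguerrePhi α n x
      = ((-1:ℝ)^n / Real.Gamma ((n:ℝ)+1)) * (Real.exp (c*x) * lagH p n x) := by
    intro x hx
    rw [Set.mem_Ioi] at hx
    have hg := iter_eq p n x hx
    have hne : x ^ α ≠ 0 := (Real.rpow_pos_of_pos hx α).ne'
    have hxe : Real.exp (-s*x) * Real.exp (-x/2) * Real.exp x = Real.exp (c*x) := by
      rw [← Real.exp_add, ← Real.exp_add]
      congr 1
      rw [hc_def]; ring
    unfold laguerrePhi laguerreL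
    rw [hg, Real.rpow_neg hx.le]
    calc Real.exp (-s*x) * (Real.exp (-x/2) * x^α
          * ((-1:ℝ)^n * Real.exp x * (x^α)⁻¹ * lagH p n x) / Real.Gamma ((n:ℝ)+1))
        = ((-1:ℝ)^n / Real.Gamma ((n:ℝ)+1))
            * ((Real.exp (-s*x) * Real.exp (-x/2) * Real.exp x) * lagH p n x)
            * (x^α * (x^α)⁻¹) := by ring
      _ = _ := by rw [hxe, mul_inv_cancel₀ hne, mul_one]
  rw [setIntegral_congr_fun measurableSet_Ioi hcong, integral_const_mul,
    chain hc n hkn, base hp hc]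
  have h1c : 1 - c = s + 1/2 := by rw [hc_def]; ring
  have hspos : 0 < s + 1/2 := by linarith
  rw [h1c, one_div, Real.inv_rpow hspos.le]
  have hexp : (n:ℝ) + 1 + α = p + 1 := by rw [hp_def]; ring
  have hΓarg : (n:ℝ) + α + 1 = p + 1 := by rw [hp_def]
  rw [hexp, hΓarg]
  have hpow : ((-1:ℝ))^n * (-c)^n = c^n := by rw [← mul_pow]; norm_num
  have hrne : ((s + 1/2) ^ (p+1) : ℝ) ≠ 0 := (Real.rpow_pos_of_pos hspos _).ne'
  field_simp
  rw [← hpow]
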